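/- Let D ≥ 1 and M ≥ 2 be integers, u₁, u₂ ∈ ℝ^D and θ₁, θ₂ > 0. Let f(ξ) = Σ_{|α| ≤ M} f_{1,α} 𝓗_{θ₁,α}(v₁) with v₁ = (ξ − u₁)/√θ₁. Suppose the functions F_α : [0,1] → ℝ, for |α| ≤ M, are differentiable and satisfy the projection ODE system with initial data F_α(0) = f_{1,α}. Define g(ξ) = Σ_{|α| ≤ M} F_α(1) 𝓗_{θ₂,α}(v₂) with v₂ = (ξ − u₂)/√θ₂. Then for every polynomial p : ℝ^D → ℝ of total degree at most M, ∫_{ℝ^D} p(ξ) f(ξ) dξ = ∫_{ℝ^D} p(ξ) g(ξ) dξ. -/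

import Mathlib

open MeasureTheory

/-- The probabilists' Hermite polynomial `He n`, evaluated at a real number. -/
noncomputable def He (n : ℕ) (x : ℝ) : ℝ :=
  Polynomial.aeval x (Polynomial.hermite n)

/-- The basis function `𝓗_{θ,α}(v) = ∏_d (2π)^(-1/2) θ^(-(α_d+1)/2) He_{α_d}(v_d) e^(-v_d²/2)`. -/
noncomputable def Hb {D : ℕ} (θ : ℝ) (α : Fin D → ℕ) (v : Fin D → ℝ) : ℝ :=
  ∏ d, ((Real.sqrt (2 * Real.pi))⁻¹ * θ ^ (-(((α d : ℝ) + 1) / 2)) * He (α d) (v d) *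
    Real.exp (-(v d) ^ 2 / 2))

/-- The finite set of multi-indices `α : Fin D → ℕ` with `|α| ≤ M`. -/
noncomputable def multiIndices (D M : ℕ) : Finset (Fin D → ℕ) :=
  ((Finset.univ : Finset (Fin D → Fin (M + 1))).image (fun a => fun d => (a d : ℕ))).filter
    (fun α => (∑ d, α d) ≤ M)

section Aux
open Real Finset Set Filter

/-- Gaussian moments pattern: `Nn k = (k-1)!!` for even `k`, `0` for odd. -/
noncomputable def Nn : ℕ → ℝ
  | 0 => 1
  | 1 => 0
  | (k+2) => (k+1) * Nn k

/-- `Gg a b = ∫ x^b He_a(x) γ(x) dx / √(2π) = b!/(b-a)! * Nn (b-a)` (0 if `a > b`). -/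
noncomputable def Gg (a b : ℕ) : ℝ := (b.descFactorial a : ℝ) * Nn (b - a)

lemma Gg_eq_zero_of_lt {a b : ℕ} (h : b < a) : Gg a b = 0 := by
  simp [Gg, Nat.descFactorial_eq_zero_iff_lt.2 h]

lemma Gg_zero_left (b : ℕ) : Gg 0 b = Nn b := by simp [Gg]

lemma Gg_succ_left (a b : ℕ) : Gg (a+1) b = b * Gg a (b-1) := by
  cases b with
  | zero => simp [Gg]
  | succ n =>
    simp only [Gg, Nat.succ_descFactorial_succ, Nat.succ_sub_succ, Nat.sub_zero]
    push_cast
    ring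

lemma Gg_two_left (a b : ℕ) : ((b:ℝ) - a) * Gg a b = Gg (a+2) b := by
  rcases lt_or_ge b a with h | h
  · rw [Gg_eq_zero_of_lt h, Gg_eq_zero_of_lt (by omega), mul_zero]
  rcases Nat.lt_or_ge b (a+2) with h2 | h2
  · -- b = a or b = a+1
    rw [Gg_eq_zero_of_lt h2]
    have hb : b = a ∨ b = a + 1 := by omega
    rcases hb with rfl | rfl
    · simp [Gg]
    · have h1 : a + 1 - a = 1 := by omega
      simp [Gg, h1, Nn]
  · -- b ≥ a + 2
    have hba : b - a = (b - a - 2) + 2 := by omega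
    have h1 : Gg a b = (b.descFactorial a : ℝ) * ((b - a - 1) * Nn (b - a - 2)) := by
      rw [Gg, hba, Nn]
      congr 2
      · rw [Nat.cast_sub (by omega : 2 ≤ b - a), Nat.cast_sub h]
        push_cast; ring
    have h2' : Gg (a+2) b = ((b - a - 1) * ((b - a) * (b.descFactorial a)) : ℝ) * Nn (b - a - 2) := by
      rw [Gg, show a + 2 = (a+1)+1 by rfl, Nat.descFactorial_succ, Nat.descFactorial_succ]
      rw [show b - (a+2) = b - a - 2 by omega]
      rw [show b - (a+1) = b - a - 1 by omega]
      push_cast [Nat.cast_sub (by omega : 1 ≤ b - a), Nat.cast_sub h]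
      ring
    rw [h1, h2']
    ring

/-- `Mo b a u s` : the `b`-th moment of the 1D basis function with Hermite index `a`,
center `u` and scale `s = √θ`. -/
noncomputable def Mo (b a : ℕ) (u s : ℝ) : ℝ :=
  ∑ j ∈ Finset.range (b+1), (b.choose j : ℝ) * u ^ (b - j) * s ^ ((j:ℤ) - a) * Gg a j

lemma Mo_eq_zero_of_lt {b a : ℕ} (h : b < a) (u s : ℝ) : Mo b a u s = 0 := by
  apply Finset.sum_eq_zero
  intro j hj
  rw [Finset.mem_range] at hj
  rw [Gg_eq_zero_of_lt (by omega), mul_zero]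

lemma Mo_u_id (b a : ℕ) (u s : ℝ) :
    ∑ j ∈ Finset.range (b+1),
      (b.choose j : ℝ) * (((b - j : ℕ) : ℝ) * u ^ (b - j - 1)) * s ^ ((j:ℤ) - a) * Gg a j
    = Mo b (a+1) u s := by
  unfold Mo
  rw [Finset.sum_range_succ'
    (fun j => (b.choose j : ℝ) * u ^ (b - j) * s ^ ((j:ℤ) - (a+1:ℕ)) * Gg (a+1) j) b]
  rw [Finset.sum_range_succ]
  have hz0 : (b.choose 0 : ℝ) * u ^ (b - 0) * s ^ (((0:ℕ):ℤ) - (a+1:ℕ)) * Gg (a+1) 0 = 0 := by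
    rw [Gg_succ_left]; simp
  have hzb : (b.choose b : ℝ) * (((b - b : ℕ) : ℝ) * u ^ (b - b - 1)) * s ^ ((b:ℤ) - a) * Gg a b
      = 0 := by simp
  rw [hz0, hzb, add_zero, add_zero]
  apply Finset.sum_congr rfl
  intro j hj
  rw [Finset.mem_range] at hj
  rw [Gg_succ_left a (j+1)]
  have hc : ((b.choose (j+1) : ℝ)) * ((j+1:ℕ):ℝ) = (b.choose j : ℝ) * ((b - j : ℕ):ℝ) := by
    rw [← Nat.cast_mul, ← Nat.cast_mul, Nat.choose_succ_right_eq]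
  have he : (((j+1:ℕ)):ℤ) - ((a+1:ℕ):ℤ) = (j:ℤ) - a := by push_cast; ring
  have hu : b - (j+1) = b - j - 1 := by omega
  have hj1 : (j+1) - 1 = j := rfl
  rw [he, hu, hj1]
  linear_combination (-(u ^ (b - j - 1) * s ^ ((j:ℤ) - (a:ℤ)) * Gg a j)) * hc

lemma Mo_s_id (b a : ℕ) (u s : ℝ) (hs : s ≠ 0) :
    ∑ j ∈ Finset.range (b+1),
      (b.choose j : ℝ) * u ^ (b - j) * ((((j:ℤ) - a : ℤ):ℝ) * s ^ ((j:ℤ) - a - 1)) * Gg a j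
    = s * Mo b (a+2) u s := by
  unfold Mo
  rw [Finset.mul_sum]
  apply Finset.sum_congr rfl
  intro j hj
  have h1 : (((j:ℤ) - a : ℤ):ℝ) * Gg a j = Gg (a+2) j := by
    push_cast
    exact Gg_two_left a j
  have h2 : s * s ^ ((j:ℤ) - (a+2:ℕ)) = s ^ ((j:ℤ) - a - 1) := by
    rw [← zpow_one_add₀ hs]
    congr 1
    push_cast
    ring
  rw [← h1, ← h2]
  ring

lemma hasDerivAt_Mo (b a : ℕ) {uf sf : ℝ → ℝ} {u' s' τ : ℝ}
    (hu : HasDerivAt uf u' τ) (hs : HasDerivAt sf s' τ) (hsne : sf τ ≠ 0) :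
    HasDerivAt (fun t => Mo b a (uf t) (sf t))
      (u' * Mo b (a+1) (uf τ) (sf τ) + s' * (sf τ * Mo b (a+2) (uf τ) (sf τ))) τ := by
  have h : ∀ j ∈ Finset.range (b+1), HasDerivAt
      (fun t => (b.choose j : ℝ) * (uf t ^ (b - j) * sf t ^ ((j:ℤ) - a)) * Gg a j)
      ((b.choose j : ℝ) * ((((b - j : ℕ) : ℝ) * uf τ ^ (b - j - 1) * u') * sf τ ^ ((j:ℤ) - a)
        + uf τ ^ (b - j) * ((((j:ℤ) - (a:ℤ) : ℤ):ℝ) * sf τ ^ ((j:ℤ) - a - 1) * s'))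
        * Gg a j) τ := by
    intro j _
    have hup : HasDerivAt (fun t => uf t ^ (b - j))
        ((((b - j : ℕ)) : ℝ) * uf τ ^ (b - j - 1) * u') τ := hu.pow _
    have hsp : HasDerivAt (fun t => sf t ^ ((j:ℤ) - a))
        (((((j:ℤ) - (a:ℤ) : ℤ)) : ℝ) * sf τ ^ ((j:ℤ) - a - 1) * s') τ := by
      have h0 := (hasDerivAt_zpow ((j:ℤ) - a) (sf τ) (Or.inl hsne)).comp τ hs
      exact h0
    exact ((hup.mul hsp).const_mul ((b.choose j : ℝ))).mul_const (Gg a j)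
  have hsum := HasDerivAt.fun_sum h
  have heq : (fun t => Mo b a (uf t) (sf t)) = fun t => ∑ j ∈ Finset.range (b+1),
      (b.choose j : ℝ) * (uf t ^ (b - j) * sf t ^ ((j:ℤ) - a)) * Gg a j := by
    funext t
    exact Finset.sum_congr rfl (fun j _ => by ring)
  have hval : (∑ j ∈ Finset.range (b+1),
      ((b.choose j : ℝ) * ((((b - j : ℕ) : ℝ) * uf τ ^ (b - j - 1) * u') * sf τ ^ ((j:ℤ) - a)
        + uf τ ^ (b - j) * ((((j:ℤ) - (a:ℤ) : ℤ):ℝ) * sf τ ^ ((j:ℤ) - a - 1) * s'))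
        * Gg a j))
      = u' * Mo b (a+1) (uf τ) (sf τ) + s' * (sf τ * Mo b (a+2) (uf τ) (sf τ)) := by
    rw [← Mo_u_id, ← Mo_s_id b a _ _ hsne, Finset.mul_sum, Finset.mul_sum,
      ← Finset.sum_add_distrib]
    apply Finset.sum_congr rfl
    intro j _
    ring
  rw [heq, ← hval]
  exact hsum

noncomputable def Hre (a : ℕ) : Polynomial ℝ := (Polynomial.hermite a).map (Int.castRingHom ℝ)

lemma He_eq_Hre (a : ℕ) (x : ℝ) : He a x = (Hre a).eval x := by
  rw [He, Hre, Polynomial.eval_map, Polynomial.aeval_def]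
  rfl

lemma Hre_zero : Hre 0 = 1 := by simp [Hre]

lemma Hre_succ (a : ℕ) : Hre (a+1) = Polynomial.X * Hre a - (Hre a).derivative := by
  rw [Hre, Polynomial.hermite_succ, Polynomial.map_sub, Polynomial.map_mul, Polynomial.map_X,
    ← Polynomial.derivative_map]
  rfl

lemma integrable_pow_gauss (n : ℕ) : Integrable fun x : ℝ => x ^ n * Real.exp (-x^2/2) := by
  have h := integrable_rpow_mul_exp_neg_mul_sq (b := (1:ℝ)/2) (by norm_num)
    (s := (n:ℝ)) (lt_of_lt_of_le neg_one_lt_zero (Nat.cast_nonneg n))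
  simp_rw [Real.rpow_natCast] at h
  convert h using 2 with x
  ring_nf

lemma gauss_integrable (P : Polynomial ℝ) :
    Integrable fun x : ℝ => P.eval x * Real.exp (-x^2/2) := by
  have : (fun x : ℝ => P.eval x * Real.exp (-x^2/2)) = fun x =>
      ∑ i ∈ Finset.range (P.natDegree + 1), P.coeff i * (x ^ i * Real.exp (-x^2/2)) := by
    funext x
    rw [Polynomial.eval_eq_sum_range, Finset.sum_mul]
    exact Finset.sum_congr rfl (fun i _ => by ring)
  rw [this]
  exact integrable_finset_sum _ (fun i _ => (integrable_pow_gauss i).const_mul _)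

lemma tendsto_pow_gauss_top (n : ℕ) :
    Tendsto (fun x : ℝ => x ^ n * Real.exp (-x^2/2)) atTop (nhds 0) := by
  have h := rpow_mul_exp_neg_mul_sq_isLittleO_exp_neg (b := (1:ℝ)/2) (by norm_num) (s := (n:ℝ))
  simp_rw [Real.rpow_natCast] at h
  have h2 : (fun x : ℝ => x ^ n * Real.exp (-x^2/2)) =ᶠ[atTop]
      fun x : ℝ => x ^ n * Real.exp (-(1/2) * x^2) := by
    filter_upwards with x
    ring_nf
  have hlin : Tendsto (fun x : ℝ => -(1/2 : ℝ) * x) atTop atBot := by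
    have h4 := tendsto_neg_atTop_atBot.comp
      (Filter.tendsto_id.atTop_mul_const (by norm_num : (0:ℝ) < 1/2))
    apply h4.congr
    intro x
    simp [Function.comp]
    ring
  have hexp : Tendsto (fun x : ℝ => Real.exp (-(1/2 : ℝ) * x)) atTop (nhds 0) :=
    Real.tendsto_exp_atBot.comp hlin
  have h3 := h.trans_tendsto hexp
  exact Tendsto.congr' h2.symm h3

lemma gauss_tendsto_top (P : Polynomial ℝ) :
    Tendsto (fun x : ℝ => P.eval x * Real.exp (-x^2/2)) atTop (nhds 0) := by
  have : (fun x : ℝ => P.eval x * Real.exp (-x^2/2)) = fun x =>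
      ∑ i ∈ Finset.range (P.natDegree + 1), P.coeff i * (x ^ i * Real.exp (-x^2/2)) := by
    funext x
    rw [Polynomial.eval_eq_sum_range, Finset.sum_mul]
    exact Finset.sum_congr rfl (fun i _ => by ring)
  rw [this]
  have := tendsto_finset_sum (Finset.range (P.natDegree + 1))
    (fun i _ => (tendsto_pow_gauss_top i).const_mul (P.coeff i))
  simpa using this

lemma gauss_tendsto_bot (P : Polynomial ℝ) :
    Tendsto (fun x : ℝ => P.eval x * Real.exp (-x^2/2)) atBot (nhds 0) := by
  have h := gauss_tendsto_top (P.comp (-Polynomial.X))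
  have h2 := h.comp tendsto_neg_atBot_atTop
  convert h2 using 2 with x
  simp [Function.comp, Polynomial.eval_comp]

lemma gauss_integral_deriv (P : Polynomial ℝ) :
    ∫ x : ℝ, (P.derivative.eval x - x * P.eval x) * Real.exp (-x^2/2) = 0 := by
  set Q := P.derivative - Polynomial.X * P with hQ
  have hQe : ∀ x : ℝ, Q.eval x = P.derivative.eval x - x * P.eval x := by
    intro x; simp [hQ]
  have hderiv : ∀ x : ℝ, HasDerivAt (fun x : ℝ => P.eval x * Real.exp (-x^2/2))
      (Q.eval x * Real.exp (-x^2/2)) x := by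
    intro x
    have h0 : HasDerivAt (fun x : ℝ => -x^2/2) (-x) x := by
      have := ((hasDerivAt_pow 2 x).neg).div_const 2
      refine this.congr_deriv ?_
      ring
    have hexp := h0.exp
    have := (P.hasDerivAt x).mul hexp
    refine this.congr_deriv ?_
    rw [hQe]
    ring
  have hint : Integrable fun x : ℝ => Q.eval x * Real.exp (-x^2/2) := gauss_integrable Q
  have h1 : ∫ x in Set.Iic (0:ℝ), Q.eval x * Real.exp (-x^2/2)
      = P.eval 0 * Real.exp (-(0:ℝ)^2/2) - 0 :=
    integral_Iic_of_hasDerivAt_of_tendsto' (fun x _ => hderiv x) hint.integrableOn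
      (gauss_tendsto_bot P)
  have h2 : ∫ x in Set.Ioi (0:ℝ), Q.eval x * Real.exp (-x^2/2)
      = 0 - P.eval 0 * Real.exp (-(0:ℝ)^2/2) :=
    integral_Ioi_of_hasDerivAt_of_tendsto' (fun x _ => (hderiv x)) hint.integrableOn
      (gauss_tendsto_top P)
  have h3 := intervalIntegral.integral_Iic_add_Ioi (μ := volume) (b := (0:ℝ)) hint.integrableOn hint.integrableOn
  have : ∫ x : ℝ, Q.eval x * Real.exp (-x^2/2) = 0 := by
    rw [← h3, h1, h2]; ring
  simp only [hQe] at this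
  exact this


noncomputable def Jint (a b : ℕ) : ℝ := ∫ x : ℝ, x ^ b * ((Hre a).eval x * Real.exp (-x^2/2))

lemma integrable_pow_hre_gauss (a b : ℕ) :
    Integrable fun x : ℝ => x ^ b * ((Hre a).eval x * Real.exp (-x^2/2)) := by
  have h := gauss_integrable (Polynomial.X ^ b * Hre a)
  apply h.congr
  filter_upwards with x
  simp [mul_assoc]

lemma Jint_succ (a b : ℕ) : Jint (a+1) b = (b : ℝ) * Jint a (b-1) := by
  have key := gauss_integral_deriv (Polynomial.X ^ b * Hre a)
  have hder : (Polynomial.X ^ b * Hre a).derivative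
      = Polynomial.C (b:ℝ) * Polynomial.X ^ (b-1) * Hre a
        + Polynomial.X ^ b * (Hre a).derivative := by
    rw [Polynomial.derivative_mul, Polynomial.derivative_X_pow]
  have heval : ∀ x : ℝ, ((Polynomial.X ^ b * Hre a).derivative.eval x
      - x * (Polynomial.X ^ b * Hre a).eval x) * Real.exp (-x^2/2)
      = (b:ℝ) * (x ^ (b-1) * ((Hre a).eval x * Real.exp (-x^2/2)))
        - x ^ b * ((Hre (a+1)).eval x * Real.exp (-x^2/2)) := by
    intro x
    rw [hder, Hre_succ]
    simp only [Polynomial.eval_add, Polynomial.eval_mul, Polynomial.eval_pow,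
      Polynomial.eval_C, Polynomial.eval_X, Polynomial.eval_sub]
    ring
  rw [funext heval] at key
  rw [MeasureTheory.integral_sub ((integrable_pow_hre_gauss a (b-1)).const_mul _)
    (integrable_pow_hre_gauss (a+1) b)] at key
  rw [MeasureTheory.integral_const_mul] at key
  have : (b:ℝ) * Jint a (b-1) - Jint (a+1) b = 0 := key
  linarith

lemma Jint_zero_step (b : ℕ) : Jint 0 (b+2) = ((b:ℝ)+1) * Jint 0 b := by
  have key := gauss_integral_deriv (Polynomial.X ^ (b+1))
  have heval : ∀ x : ℝ, ((Polynomial.X ^ (b+1) : Polynomial ℝ).derivative.eval x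
      - x * (Polynomial.X ^ (b+1) : Polynomial ℝ).eval x) * Real.exp (-x^2/2)
      = ((b:ℝ)+1) * (x ^ b * ((Hre 0).eval x * Real.exp (-x^2/2)))
        - x ^ (b+2) * ((Hre 0).eval x * Real.exp (-x^2/2)) := by
    intro x
    rw [Polynomial.derivative_X_pow, Hre_zero]
    simp only [Polynomial.eval_mul, Polynomial.eval_pow, Polynomial.eval_C,
      Polynomial.eval_X, Polynomial.eval_one]
    push_cast
    ring_nf
  rw [funext heval] at key
  rw [MeasureTheory.integral_sub ((integrable_pow_hre_gauss 0 b).const_mul _)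
    (integrable_pow_hre_gauss 0 (b+2))] at key
  rw [MeasureTheory.integral_const_mul] at key
  have : ((b:ℝ)+1) * Jint 0 b - Jint 0 (b+2) = 0 := key
  linarith

lemma Jint_zero_zero : Jint 0 0 = Real.sqrt (2 * Real.pi) := by
  have h := integral_gaussian (1/2 : ℝ)
  have : Jint 0 0 = ∫ x : ℝ, Real.exp (-(1/2:ℝ) * x^2) := by
    rw [Jint]
    congr 1
    funext x
    rw [Hre_zero]
    simp
    ring_nf
  rw [this, h]
  rw [show Real.pi / (1/2) = 2 * Real.pi by ring]

lemma Jint_zero_one : Jint 0 1 = 0 := by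
  have key := gauss_integral_deriv (1 : Polynomial ℝ)
  have heval : ∀ x : ℝ, (((1:Polynomial ℝ)).derivative.eval x
      - x * ((1:Polynomial ℝ)).eval x) * Real.exp (-x^2/2)
      = -(x ^ 1 * ((Hre 0).eval x * Real.exp (-x^2/2))) := by
    intro x
    rw [Hre_zero]
    simp
  rw [funext heval] at key
  rw [MeasureTheory.integral_neg] at key
  have : Jint 0 1 = ∫ x : ℝ, x ^ 1 * ((Hre 0).eval x * Real.exp (-x^2/2)) := rfl
  rw [this]
  linarith

lemma Jint_base (b : ℕ) : Jint 0 b = Real.sqrt (2 * Real.pi) * Nn b := by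
  induction b using Nat.strong_induction_on with
  | _ b ih =>
    match b with
    | 0 => rw [Jint_zero_zero, Nn]; ring
    | 1 => rw [Jint_zero_one, Nn]; ring
    | (k+2) =>
      rw [Jint_zero_step, ih k (by omega), Nn]
      ring

lemma Jint_eq (a b : ℕ) : Jint a b = Real.sqrt (2 * Real.pi) * Gg a b := by
  induction a generalizing b with
  | zero => rw [Jint_base, Gg_zero_left]
  | succ a ih =>
    rw [Jint_succ, ih (b-1), Gg_succ_left]
    ring

noncomputable def hb1 (θ : ℝ) (a : ℕ) (u : ℝ) (x : ℝ) : ℝ :=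
  (Real.sqrt (2 * Real.pi))⁻¹ * θ ^ (-(((a : ℝ) + 1) / 2)) * He a ((x - u) / Real.sqrt θ) *
    Real.exp (-((x - u) / Real.sqrt θ) ^ 2 / 2)

lemma rpow_eq_zpow_sqrt {θ : ℝ} (hθ : 0 < θ) (a : ℕ) :
    θ ^ (-(((a : ℝ) + 1) / 2)) = (Real.sqrt θ) ^ (-((a:ℤ) + 1)) := by
  rw [Real.sqrt_eq_rpow, ← Real.rpow_intCast (θ ^ ((1:ℝ)/2)) (-((a:ℤ)+1)),
    ← Real.rpow_mul hθ.le]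
  congr 1
  push_cast
  ring

lemma phi_integrable (s u : ℝ) (a b : ℕ) :
    Integrable (fun y : ℝ => (u + s*y)^b * ((Hre a).eval y * Real.exp (-y^2/2))) := by
  have h := gauss_integrable ((Polynomial.C u + Polynomial.C s * Polynomial.X)^b * Hre a)
  apply h.congr
  filter_upwards with y
  simp [mul_assoc]

lemma sqrt2pi_pos : 0 < Real.sqrt (2 * Real.pi) :=
  Real.sqrt_pos.2 (by positivity)

lemma xb_hb1_eq {θ : ℝ} (hθ : 0 < θ) (a b : ℕ) (u : ℝ) (x : ℝ) :
    x ^ b * hb1 θ a u x = ((Real.sqrt (2 * Real.pi))⁻¹ * θ ^ (-(((a : ℝ) + 1) / 2))) *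
      (fun y : ℝ => (u + Real.sqrt θ * y)^b * ((Hre a).eval y * Real.exp (-y^2/2)))
        ((x - u) / Real.sqrt θ) := by
  have hs : Real.sqrt θ ≠ 0 := ne_of_gt (Real.sqrt_pos.2 hθ)
  have hx : u + Real.sqrt θ * ((x - u) / Real.sqrt θ) = x := by field_simp; ring
  simp only [hb1, He_eq_Hre, hx]
  ring

lemma integrable_xb_hb1 {θ : ℝ} (hθ : 0 < θ) (a b : ℕ) (u : ℝ) :
    Integrable fun x : ℝ => x ^ b * hb1 θ a u x := by
  have hs : (0:ℝ) < Real.sqrt θ := Real.sqrt_pos.2 hθ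
  have h1 := phi_integrable (Real.sqrt θ) u a b
  have h2 : Integrable (fun y : ℝ =>
      (fun y : ℝ => (u + Real.sqrt θ * y)^b * ((Hre a).eval y * Real.exp (-y^2/2)))
        (y / Real.sqrt θ)) := h1.comp_div (ne_of_gt hs)
  have h3 := h2.comp_sub_right u
  have h4 := h3.const_mul ((Real.sqrt (2 * Real.pi))⁻¹ * θ ^ (-(((a : ℝ) + 1) / 2)))
  apply h4.congr
  filter_upwards with x
  rw [xb_hb1_eq hθ]

lemma moment1d {θ : ℝ} (hθ : 0 < θ) (a b : ℕ) (u : ℝ) :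
    ∫ x : ℝ, x ^ b * hb1 θ a u x = Mo b a u (Real.sqrt θ) := by
  have hs : (0:ℝ) < Real.sqrt θ := Real.sqrt_pos.2 hθ
  set s := Real.sqrt θ with hsdef
  set φ := fun y : ℝ => (u + s*y)^b * ((Hre a).eval y * Real.exp (-y^2/2)) with hφ
  have step1 : ∫ x : ℝ, x ^ b * hb1 θ a u x
      = ((Real.sqrt (2 * Real.pi))⁻¹ * θ ^ (-(((a : ℝ) + 1) / 2))) * ∫ x : ℝ, φ ((x - u)/s) := by
    rw [← MeasureTheory.integral_const_mul]
    congr 1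
    funext x
    exact xb_hb1_eq hθ a b u x
  have step2 : ∫ x : ℝ, φ ((x - u)/s) = s * ∫ y, φ y := by
    have e1 : ∫ x : ℝ, φ ((x - u)/s) = ∫ x : ℝ, (fun y => φ (y / s)) (x - u) := rfl
    rw [e1, integral_sub_right_eq_self (fun y => φ (y / s)) u,
      MeasureTheory.Measure.integral_comp_div φ s, abs_of_pos hs, smul_eq_mul]
  have step3 : ∫ y, φ y = ∑ j ∈ Finset.range (b+1),
      (s^j * u^(b-j) * (b.choose j : ℝ)) * Jint a j := by
    have e2 : φ = fun y => ∑ j ∈ Finset.range (b+1),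
        (s^j * u^(b-j) * (b.choose j : ℝ)) * (y^j * ((Hre a).eval y * Real.exp (-y^2/2))) := by
      funext y
      rw [hφ]
      simp only
      rw [add_comm u (s*y), add_pow, Finset.sum_mul]
      apply Finset.sum_congr rfl
      intro j _
      rw [mul_pow]
      ring
    rw [e2, MeasureTheory.integral_finset_sum _
      (fun j _ => (integrable_pow_hre_gauss a j).const_mul _)]
    exact Finset.sum_congr rfl (fun j _ => by rw [MeasureTheory.integral_const_mul]; rfl)
  rw [step1, step2, step3, Finset.mul_sum, Finset.mul_sum]
  unfold Mo
  apply Finset.sum_congr rfl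
  intro j _
  rw [Jint_eq, rpow_eq_zpow_sqrt hθ, ← hsdef]
  have hzp : s ^ (-((a:ℤ)+1)) * (s * s^j) = s ^ ((j:ℤ) - a) := by
    rw [← pow_succ' s j, ← zpow_natCast s (j+1), ← zpow_add₀ (ne_of_gt hs)]
    congr 1
    push_cast
    ring
  have h2pi : (Real.sqrt (2 * Real.pi))⁻¹ * Real.sqrt (2 * Real.pi) = 1 :=
    inv_mul_cancel₀ (ne_of_gt sqrt2pi_pos)
  linear_combination (u^(b-j) * (b.choose j : ℝ) * Gg a j * (Real.sqrt (2*Real.pi))⁻¹ *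
      Real.sqrt (2*Real.pi)) * hzp
    + (u^(b-j) * (b.choose j : ℝ) * Gg a j * s ^ ((j:ℤ) - (a:ℤ))) * h2pi

lemma prod_form {D : ℕ} (θ : ℝ) (α β : Fin D → ℕ) (u : Fin D → ℝ) (ξ : Fin D → ℝ) :
    (∏ d, ξ d ^ β d) * Hb θ α (fun d => (ξ d - u d) / Real.sqrt θ)
      = ∏ d, (ξ d ^ β d * hb1 θ (α d) (u d) (ξ d)) := by
  rw [Hb, ← Finset.prod_mul_distrib]
  exact Finset.prod_congr rfl (fun d _ => by rw [hb1])

lemma integrable_prod_form {D : ℕ} {θ : ℝ} (hθ : 0 < θ) (α β : Fin D → ℕ) (u : Fin D → ℝ) :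
    Integrable fun ξ : Fin D → ℝ => (∏ d, ξ d ^ β d) *
      Hb θ α (fun d => (ξ d - u d) / Real.sqrt θ) := by
  have h := MeasureTheory.Integrable.fintype_prod_dep
    (f := fun (d : Fin D) (x : ℝ) => x ^ β d * hb1 θ (α d) (u d) x)
    (fun d => integrable_xb_hb1 hθ (α d) (β d) (u d))
  apply h.congr
  filter_upwards with ξ
  rw [prod_form]

lemma momentD {D : ℕ} {θ : ℝ} (hθ : 0 < θ) (α β : Fin D → ℕ) (u : Fin D → ℝ) :
    ∫ ξ : Fin D → ℝ, (∏ d, ξ d ^ β d) * Hb θ α (fun d => (ξ d - u d) / Real.sqrt θ)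
      = ∏ d, Mo (β d) (α d) (u d) (Real.sqrt θ) := by
  have e : ∀ ξ : Fin D → ℝ, (∏ d, ξ d ^ β d) * Hb θ α (fun d => (ξ d - u d) / Real.sqrt θ)
      = ∏ d, (ξ d ^ β d * hb1 θ (α d) (u d) (ξ d)) := prod_form θ α β u
  rw [funext e, MeasureTheory.volume_pi, MeasureTheory.integral_fintype_prod_eq_prod
    (f := fun d (x : ℝ) => x ^ β d * hb1 θ (α d) (u d) x)]
  exact Finset.prod_congr rfl (fun d _ => moment1d hθ (α d) (β d) (u d))

lemma eval_prod_univ {D : ℕ} (β : Fin D →₀ ℕ) (ξ : Fin D → ℝ) :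
    (∏ i ∈ β.support, ξ i ^ β i) = ∏ d, ξ d ^ β d := by
  apply Finset.prod_subset (Finset.subset_univ _)
  intro x _ hx
  rw [Finsupp.notMem_support_iff.1 hx, pow_zero]

lemma integral_poly_sum {D M : ℕ} (p : MvPolynomial (Fin D) ℝ) {θ : ℝ} (hθ : 0 < θ)
    (u : Fin D → ℝ) (c : (Fin D → ℕ) → ℝ) :
    ∫ ξ : Fin D → ℝ, MvPolynomial.eval ξ p *
        (∑ α ∈ multiIndices D M, c α * Hb θ α (fun d => (ξ d - u d) / Real.sqrt θ))
      = ∑ β ∈ p.support, ∑ α ∈ multiIndices D M, (MvPolynomial.coeff β p * c α) *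
          ∏ d, Mo (β d) (α d) (u d) (Real.sqrt θ) := by
  have e : ∀ ξ : Fin D → ℝ, MvPolynomial.eval ξ p *
        (∑ α ∈ multiIndices D M, c α * Hb θ α (fun d => (ξ d - u d) / Real.sqrt θ))
      = ∑ β ∈ p.support, ∑ α ∈ multiIndices D M, (MvPolynomial.coeff β p * c α) *
          ((∏ d, ξ d ^ β d) * Hb θ α (fun d => (ξ d - u d) / Real.sqrt θ)) := by
    intro ξ
    rw [MvPolynomial.eval_eq, Finset.sum_mul]
    apply Finset.sum_congr rfl
    intro β _
    rw [Finset.mul_sum]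
    apply Finset.sum_congr rfl
    intro α _
    rw [eval_prod_univ]
    ring
  rw [funext e, MeasureTheory.integral_finset_sum _ (fun β _ =>
    MeasureTheory.integrable_finset_sum _ (fun α _ =>
      ((integrable_prod_form hθ α (fun d => β d) u).const_mul _)))]
  apply Finset.sum_congr rfl
  intro β _
  rw [MeasureTheory.integral_finset_sum _ (fun α _ =>
    ((integrable_prod_form hθ α (fun d => β d) u).const_mul _))]
  apply Finset.sum_congr rfl
  intro α _
  rw [MeasureTheory.integral_const_mul, momentD hθ]

lemma mem_multiIndices {D M : ℕ} (α : Fin D → ℕ) :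
    α ∈ multiIndices D M ↔ (∑ d, α d) ≤ M := by
  constructor
  · intro h
    exact (Finset.mem_filter.1 h).2
  · intro h
    refine Finset.mem_filter.2 ⟨?_, h⟩
    apply Finset.mem_image.2
    have hle : ∀ d, α d ≤ M := fun d =>
      le_trans (Finset.single_le_sum (f := α) (fun i _ => Nat.zero_le _) (Finset.mem_univ d)) h
    exact ⟨fun d => ⟨α d, Nat.lt_succ_of_le (hle d)⟩, Finset.mem_univ _, rfl⟩

/-- The key reindexing identity used to show the moment functional is conserved. -/
lemma shift_sum {D M k : ℕ} (d : Fin D) (β : Fin D → ℕ) (hβ : (∑ d', β d') ≤ M)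
    (G : (Fin D → ℕ) → ℝ) (P : Fin D → ℕ → ℝ) (hP : ∀ d' a, β d' < a → P d' a = 0) :
    ∑ α ∈ multiIndices D M,
      (if k ≤ α d then G (fun i => α i - (if i = d then k else 0)) else 0) * ∏ d', P d' (α d')
    = ∑ α ∈ multiIndices D M, G α * ∏ d', P d' (α d' + (if d' = d then k else 0)) := by
  classical
  have hsub₁ : ∀ α ∈ multiIndices D M,
      α ∉ (multiIndices D M).filter (fun α => k ≤ α d ∧ ∀ d', α d' ≤ β d') →
      (if k ≤ α d then G (fun i => α i - (if i = d then k else 0)) else 0) * ∏ d', P d' (α d')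
        = 0 := by
    intro α hα hnot
    rw [Finset.mem_filter, not_and_or] at hnot
    rcases hnot with h | h
    · exact absurd hα h
    rw [not_and_or] at h
    rcases h with h | h
    · rw [if_neg h, zero_mul]
    · push_neg at h
      obtain ⟨d', hd'⟩ := h
      rw [Finset.prod_eq_zero (Finset.mem_univ d') (hP d' (α d') hd'), mul_zero]
  have hsub₂ : ∀ α ∈ multiIndices D M,
      α ∉ (multiIndices D M).filter (fun α => ∀ d', α d' + (if d' = d then k else 0) ≤ β d') →
      G α * ∏ d', P d' (α d' + (if d' = d then k else 0)) = 0 := by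
    intro α hα hnot
    rw [Finset.mem_filter, not_and_or] at hnot
    rcases hnot with h | h
    · exact absurd hα h
    push_neg at h
    obtain ⟨d', hd'⟩ := h
    rw [Finset.prod_eq_zero (Finset.mem_univ d') (hP d' _ hd'), mul_zero]
  rw [← Finset.sum_subset (Finset.filter_subset
      (fun α => k ≤ α d ∧ ∀ d', α d' ≤ β d') (multiIndices D M)) hsub₁,
    ← Finset.sum_subset (Finset.filter_subset
      (fun α => ∀ d', α d' + (if d' = d then k else 0) ≤ β d') (multiIndices D M)) hsub₂]
  apply Finset.sum_nbij' (i := fun α => fun m => α m - (if m = d then k else 0))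
    (j := fun γ => fun m => γ m + (if m = d then k else 0))
  · intro α hα
    rw [Finset.mem_filter] at hα ⊢
    have hmem := hα.1
    have hkd := hα.2.1
    have hle := hα.2.2
    constructor
    · rw [mem_multiIndices] at hmem ⊢
      exact le_trans (Finset.sum_le_sum (fun i _ => Nat.sub_le _ _)) hmem
    · intro d'
      have := hle d'
      by_cases hd : d' = d
      · subst hd; simp only [if_pos rfl, eq_self_iff_true, if_true] at *; omega
      · simp only [if_neg hd] at *; omega
  · intro γ hγ
    rw [Finset.mem_filter] at hγ ⊢
    have hmem := hγ.1
    have hle := hγ.2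
    refine ⟨?_, ?_, ?_⟩
    · rw [mem_multiIndices]
      refine le_trans (Finset.sum_le_sum (fun d' _ => hle d')) hβ
    · simp only [if_pos rfl, eq_self_iff_true, if_true]; omega
    · intro d'
      have := hle d'
      by_cases hd : d' = d
      · subst hd; simp only [if_pos rfl, eq_self_iff_true, if_true] at *; omega
      · simp only [if_neg hd] at *; omega
  · intro α hα
    rw [Finset.mem_filter] at hα
    have hkd := hα.2.1
    funext m
    by_cases hd : m = d
    · subst hd; simp only [if_pos rfl, eq_self_iff_true, if_true] at *; omega
    · simp only [if_neg hd]; omega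
  · intro γ hγ
    funext m
    by_cases hd : m = d
    · subst hd; simp only [if_pos rfl, eq_self_iff_true, if_true]; omega
    · simp only [if_neg hd]; omega
  · intro α hα
    rw [Finset.mem_filter] at hα
    have hkd := hα.2.1
    rw [if_pos hkd]
    congr 1
    apply Finset.prod_congr rfl
    intro d' _
    congr 1
    by_cases hd : d' = d
    · subst hd; simp only [if_pos rfl, eq_self_iff_true, if_true] at *; omega
    · simp only [if_neg hd]; omega

lemma prod_erase_shift {D : ℕ} (d : Fin D) (α : Fin D → ℕ) (k : ℕ) (P : Fin D → ℕ → ℝ) :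
    (∏ d' ∈ Finset.univ.erase d, P d' (α d')) * P d (α d + k)
      = ∏ d', P d' (α d' + (if d' = d then k else 0)) := by
  rw [← Finset.mul_prod_erase Finset.univ _ (Finset.mem_univ d)]
  rw [if_pos rfl, mul_comm]
  congr 1
  apply Finset.prod_congr rfl
  intro d' hd'
  rw [if_neg (Finset.mem_erase.1 hd').1, add_zero]

/-- Moment conservation along the projection ODE. -/
lemma conservation (D M : ℕ) (hM : 2 ≤ M)
    (u₁ u₂ : Fin D → ℝ) (θ₁ θ₂ : ℝ) (hθ₁ : 0 < θ₁) (hθ₂ : 0 < θ₂)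
    (θh : ℝ) (hθh : θh = Real.sqrt (θ₁ / θ₂))
    (w : Fin D → ℝ) (hw : w = fun d => (u₁ d - u₂ d) / Real.sqrt θ₂)
    (R S : ℝ → ℝ)
    (hR : ∀ τ, R τ = (θh - 1) / ((θh - 1) * τ + 1))
    (hS : ∀ τ, S τ = 1 / ((θh - 1) * τ + 1))
    (f1 : (Fin D → ℕ) → ℝ) (F : (Fin D → ℕ) → ℝ → ℝ)
    (hODE : ∀ α ∈ multiIndices D M, ∀ τ ∈ Set.Icc (0:ℝ) 1,
      HasDerivWithinAt (F α)
        (∑ d, (S τ) ^ 2 *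
          (θ₁ * R τ *
              (if 2 ≤ α d then F (fun i => α i - (if i = d then 2 else 0)) τ else 0)
            + w d * Real.sqrt θ₁ *
              (if 1 ≤ α d then F (fun i => α i - (if i = d then 1 else 0)) τ else 0)))
        (Set.Icc (0:ℝ) 1) τ)
    (hinit : ∀ α ∈ multiIndices D M, F α 0 = f1 α)
    (β : Fin D → ℕ) (hβ : (∑ d, β d) ≤ M) :
    ∑ α ∈ multiIndices D M, f1 α * ∏ d, Mo (β d) (α d) (u₁ d) (Real.sqrt θ₁)
      = ∑ α ∈ multiIndices D M, F α 1 * ∏ d, Mo (β d) (α d) (u₂ d) (Real.sqrt θ₂) := by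
  classical
  have hSfun : S = fun τ => 1 / ((θh - 1) * τ + 1) := funext hS
  subst hSfun
  set c : ℝ := θh - 1 with hc
  have hθh_pos : 0 < θh := by
    rw [hθh]
    exact Real.sqrt_pos.2 (div_pos hθ₁ hθ₂)
  have hden : ∀ τ ∈ Set.Icc (0:ℝ) 1, 0 < c * τ + 1 := by
    intro τ hτ
    obtain ⟨h0, h1⟩ := hτ
    have : c * τ + 1 = (1 - τ) + θh * τ := by rw [hc]; ring
    rw [this]
    rcases lt_or_eq_of_le h1 with h | h
    · have : 0 < 1 - τ := by linarith
      positivity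
    · subst h; simpa using hθh_pos
  have hs1 : (0:ℝ) < Real.sqrt θ₁ := Real.sqrt_pos.2 hθ₁
  have hs2 : (0:ℝ) < Real.sqrt θ₂ := Real.sqrt_pos.2 hθ₂
  set uu : Fin D → ℝ → ℝ := fun d τ => u₁ d - w d * Real.sqrt θ₁ * (τ * (1 / (c * τ + 1)))
    with huu
  set sS : ℝ → ℝ := fun τ => Real.sqrt θ₁ * (1 / (c * τ + 1)) with hsS
  set Φ : ℝ → ℝ := fun τ => ∑ α ∈ multiIndices D M,
    F α τ * ∏ d, Mo (β d) (α d) (uu d τ) (sS τ) with hΦ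
  -- derivative of Φ is zero on [0,1]
  have hderiv : ∀ τ ∈ Set.Icc (0:ℝ) 1, HasDerivWithinAt Φ 0 (Set.Icc (0:ℝ) 1) τ := by
    intro τ hτ
    have hne : c * τ + 1 ≠ 0 := ne_of_gt (hden τ hτ)
    set st : ℝ := 1 / (c * τ + 1) with hst
    have hstpos : 0 < st := by rw [hst]; exact one_div_pos.2 (hden τ hτ)
    -- derivative of the scalar building blocks
    have hlin : HasDerivAt (fun t : ℝ => c * t + 1) c τ := by
      simpa using ((hasDerivAt_id τ).const_mul c).add_const 1
    have hSder : HasDerivAt (fun t : ℝ => 1 / (c * t + 1)) (-c * st^2) τ := by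
      have h := hlin.inv hne
      simp only [one_div]
      refine h.congr_deriv ?_
      rw [hst]
      field_simp
    have hTS : HasDerivAt (fun t : ℝ => t * (1 / (c * t + 1))) (st^2) τ := by
      have h := (hasDerivAt_id τ).mul hSder
      refine h.congr_deriv ?_
      rw [hst]
      field_simp
      simp only [id_eq]
      ring
    have huud : ∀ d, HasDerivAt (uu d) (-(w d * Real.sqrt θ₁ * st^2)) τ := by
      intro d
      rw [huu]
      simpa using ((hTS.const_mul (w d * Real.sqrt θ₁)).const_sub (u₁ d)).congr_deriv (by ring)
    have hsSd : HasDerivAt sS (Real.sqrt θ₁ * (-c * st^2)) τ := by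
      rw [hsS]
      exact hSder.const_mul (Real.sqrt θ₁)
    have hsne : sS τ ≠ 0 := by
      rw [hsS]
      have : (0:ℝ) < Real.sqrt θ₁ * (1 / (c * τ + 1)) :=
        mul_pos hs1 (one_div_pos.2 (hden τ hτ))
      exact ne_of_gt (by simpa using this)
    -- derivative of the product of Mo's
    have hprod : ∀ α : Fin D → ℕ, HasDerivAt
        (fun t => ∏ d, Mo (β d) (α d) (uu d t) (sS t))
        (∑ d, (∏ d' ∈ Finset.univ.erase d, Mo (β d') (α d') (uu d' τ) (sS τ)) *
          ((-(w d * Real.sqrt θ₁ * st^2)) * Mo (β d) (α d + 1) (uu d τ) (sS τ)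
            + (Real.sqrt θ₁ * (-c * st^2)) * (sS τ * Mo (β d) (α d + 2) (uu d τ) (sS τ)))) τ := by
      intro α
      have h := HasDerivAt.fun_finset_prod (u := Finset.univ)
        (f := fun d t => Mo (β d) (α d) (uu d t) (sS t))
        (f' := fun d => (-(w d * Real.sqrt θ₁ * st^2)) * Mo (β d) (α d + 1) (uu d τ) (sS τ)
            + (Real.sqrt θ₁ * (-c * st^2)) * (sS τ * Mo (β d) (α d + 2) (uu d τ) (sS τ)))
        (fun d _ => hasDerivAt_Mo (β d) (α d) (huud d) hsSd hsne)
      simpa [smul_eq_mul] using h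
    -- assemble the derivative of Φ
    have hΦder : HasDerivWithinAt Φ
        (∑ α ∈ multiIndices D M,
          ((∑ d, st ^ 2 *
            (θ₁ * R τ *
                (if 2 ≤ α d then F (fun i => α i - (if i = d then 2 else 0)) τ else 0)
              + w d * Real.sqrt θ₁ *
                (if 1 ≤ α d then F (fun i => α i - (if i = d then 1 else 0)) τ else 0)))
            * (∏ d, Mo (β d) (α d) (uu d τ) (sS τ))
          + F α τ *
            (∑ d, (∏ d' ∈ Finset.univ.erase d, Mo (β d') (α d') (uu d' τ) (sS τ)) *
              ((-(w d * Real.sqrt θ₁ * st^2)) * Mo (β d) (α d + 1) (uu d τ) (sS τ)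
                + (Real.sqrt θ₁ * (-c * st^2)) * (sS τ * Mo (β d) (α d + 2) (uu d τ) (sS τ))))))
        (Set.Icc (0:ℝ) 1) τ := by
      rw [hΦ]
      apply HasDerivWithinAt.fun_sum
      intro α hα
      have h1 := hODE α hα τ hτ
      have h2 := (hprod α).hasDerivWithinAt (s := Set.Icc (0:ℝ) 1)
      exact h1.mul h2
    -- the derivative is zero
    have key : (∑ α ∈ multiIndices D M,
          ((∑ d, st ^ 2 *
            (θ₁ * R τ *
                (if 2 ≤ α d then F (fun i => α i - (if i = d then 2 else 0)) τ else 0)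
              + w d * Real.sqrt θ₁ *
                (if 1 ≤ α d then F (fun i => α i - (if i = d then 1 else 0)) τ else 0)))
            * (∏ d, Mo (β d) (α d) (uu d τ) (sS τ))
          + F α τ *
            (∑ d, (∏ d' ∈ Finset.univ.erase d, Mo (β d') (α d') (uu d' τ) (sS τ)) *
              ((-(w d * Real.sqrt θ₁ * st^2)) * Mo (β d) (α d + 1) (uu d τ) (sS τ)
                + (Real.sqrt θ₁ * (-c * st^2)) * (sS τ * Mo (β d) (α d + 2) (uu d τ) (sS τ))))))
        = 0 := by
      have hP0 : ∀ d' a, β d' < a → Mo (β d') a (uu d' τ) (sS τ) = 0 :=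
        fun d' a h => Mo_eq_zero_of_lt h _ _
      have hRst : R τ = c * st := by rw [hR τ, hst, hc]; ring
      have hsqθ : Real.sqrt θ₁ * Real.sqrt θ₁ = θ₁ := Real.mul_self_sqrt hθ₁.le
      have hsSτ : sS τ = Real.sqrt θ₁ * st := by rw [hsS]
      have stepA : ∀ α ∈ multiIndices D M,
          ((∑ d, st ^ 2 *
            (θ₁ * R τ *
                (if 2 ≤ α d then F (fun i => α i - (if i = d then 2 else 0)) τ else 0)
              + w d * Real.sqrt θ₁ *
                (if 1 ≤ α d then F (fun i => α i - (if i = d then 1 else 0)) τ else 0)))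
            * (∏ d, Mo (β d) (α d) (uu d τ) (sS τ))
          + F α τ *
            (∑ d, (∏ d' ∈ Finset.univ.erase d, Mo (β d') (α d') (uu d' τ) (sS τ)) *
              ((-(w d * Real.sqrt θ₁ * st^2)) * Mo (β d) (α d + 1) (uu d τ) (sS τ)
                + (Real.sqrt θ₁ * (-c * st^2)) * (sS τ * Mo (β d) (α d + 2) (uu d τ) (sS τ)))))
          = ∑ d,
            ((st^2 * (θ₁ * R τ)) *
              ((if 2 ≤ α d then F (fun i => α i - (if i = d then 2 else 0)) τ else 0)
                * ∏ d', Mo (β d') (α d') (uu d' τ) (sS τ))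
            + (st^2 * (w d * Real.sqrt θ₁)) *
              ((if 1 ≤ α d then F (fun i => α i - (if i = d then 1 else 0)) τ else 0)
                * ∏ d', Mo (β d') (α d') (uu d' τ) (sS τ))
            + (-(w d * Real.sqrt θ₁ * st^2)) *
              (F α τ * ∏ d', Mo (β d') (α d' + (if d' = d then 1 else 0)) (uu d' τ) (sS τ))
            + ((Real.sqrt θ₁ * (-c * st^2)) * sS τ) *
              (F α τ * ∏ d', Mo (β d') (α d' + (if d' = d then 2 else 0)) (uu d' τ) (sS τ))) := by
        intro α _
        rw [Finset.sum_mul, Finset.mul_sum, ← Finset.sum_add_distrib]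
        apply Finset.sum_congr rfl
        intro d _
        have h1 := prod_erase_shift d α 1 (fun d' a => Mo (β d') a (uu d' τ) (sS τ))
        have h2 := prod_erase_shift d α 2 (fun d' a => Mo (β d') a (uu d' τ) (sS τ))
        linear_combination (F α τ * (-(w d * Real.sqrt θ₁ * st^2))) * h1
          + (F α τ * ((Real.sqrt θ₁ * (-c * st^2)) * sS τ)) * h2
      rw [Finset.sum_congr rfl stepA, Finset.sum_comm]
      apply Finset.sum_eq_zero
      intro d _
      rw [Finset.sum_add_distrib, Finset.sum_add_distrib, Finset.sum_add_distrib,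
        ← Finset.mul_sum, ← Finset.mul_sum, ← Finset.mul_sum, ← Finset.mul_sum]
      rw [shift_sum (k := 2) d β hβ (fun γ => F γ τ)
          (fun d' a => Mo (β d') a (uu d' τ) (sS τ)) hP0,
        shift_sum (k := 1) d β hβ (fun γ => F γ τ)
          (fun d' a => Mo (β d') a (uu d' τ) (sS τ)) hP0]
      have hco2 : st^2 * (θ₁ * R τ) + (Real.sqrt θ₁ * (-c * st^2)) * sS τ = 0 := by
        rw [hRst, hsSτ]
        linear_combination (-(c * st^3)) * hsqθ
      have hco1 : st^2 * (w d * Real.sqrt θ₁) + (-(w d * Real.sqrt θ₁ * st^2)) = 0 := by ring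
      linear_combination
        (∑ α ∈ multiIndices D M, F α τ *
          ∏ d', Mo (β d') (α d' + (if d' = d then 2 else 0)) (uu d' τ) (sS τ)) * hco2
        + (∑ α ∈ multiIndices D M, F α τ *
          ∏ d', Mo (β d') (α d' + (if d' = d then 1 else 0)) (uu d' τ) (sS τ)) * hco1
    rw [key] at hΦder
    exact hΦder
  -- Φ is constant on [0,1]
  have hcont : ContinuousOn Φ (Set.Icc (0:ℝ) 1) :=
    fun τ hτ => (hderiv τ hτ).continuousWithinAt
  have hconst := constant_of_has_deriv_right_zero hcont (fun τ hτ => by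
    have h := hderiv τ (Set.mem_Icc_of_Ico hτ)
    exact h.mono_of_mem_nhdsWithin (Icc_mem_nhdsGE_of_mem hτ))
  have hΦ10 : Φ 1 = Φ 0 := hconst 1 (Set.right_mem_Icc.2 zero_le_one)
  -- evaluate the endpoints
  have hc1 : c + 1 = θh := by rw [hc]; ring
  have hθh_eq : θh = Real.sqrt θ₁ / Real.sqrt θ₂ := by rw [hθh, Real.sqrt_div hθ₁.le]
  have hsS0 : sS 0 = Real.sqrt θ₁ := by simp [hsS]
  have huu0 : ∀ d, uu d 0 = u₁ d := by intro d; simp [huu]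
  have hsS1 : sS 1 = Real.sqrt θ₂ := by
    simp only [hsS, mul_one, hc1]
    rw [hθh_eq]
    field_simp
  have huu1 : ∀ d, uu d 1 = u₂ d := by
    intro d
    simp only [huu, mul_one, hc1, one_mul]
    rw [hθh_eq, hw]
    simp only
    field_simp
    ring
  have e0 : Φ 0 = ∑ α ∈ multiIndices D M, f1 α * ∏ d, Mo (β d) (α d) (u₁ d) (Real.sqrt θ₁) := by
    rw [hΦ]
    apply Finset.sum_congr rfl
    intro α hα
    rw [hinit α hα]
    congr 1
    exact Finset.prod_congr rfl (fun d _ => by rw [huu0, hsS0])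
  have e1 : Φ 1 = ∑ α ∈ multiIndices D M, F α 1 * ∏ d, Mo (β d) (α d) (u₂ d) (Real.sqrt θ₂) := by
    rw [hΦ]
    apply Finset.sum_congr rfl
    intro α hα
    congr 1
    exact Finset.prod_congr rfl (fun d _ => by rw [huu1, hsS1])
  rw [← e0, ← e1, hΦ10]

end Aux

/-- the conservative projection between `F_M(u₁,θ₁)` and `F_M(u₂,θ₂)`
preserves all moments of order at most `M`. -/
theorem stmt0 (D M : ℕ) (hD : 1 ≤ D) (hM : 2 ≤ M)
    (u₁ u₂ : Fin D → ℝ) (θ₁ θ₂ : ℝ) (hθ₁ : 0 < θ₁) (hθ₂ : 0 < θ₂)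
    (θh : ℝ) (hθh : θh = Real.sqrt (θ₁ / θ₂))
    (w : Fin D → ℝ) (hw : w = fun d => (u₁ d - u₂ d) / Real.sqrt θ₂)
    (R S : ℝ → ℝ)
    (hR : ∀ τ, R τ = (θh - 1) / ((θh - 1) * τ + 1))
    (hS : ∀ τ, S τ = 1 / ((θh - 1) * τ + 1))
    (f1 : (Fin D → ℕ) → ℝ) (F : (Fin D → ℕ) → ℝ → ℝ)
    (hODE : ∀ α ∈ multiIndices D M, ∀ τ ∈ Set.Icc (0:ℝ) 1,
      HasDerivWithinAt (F α)
        (∑ d, (S τ) ^ 2 *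
          (θ₁ * R τ *
              (if 2 ≤ α d then F (fun i => α i - (if i = d then 2 else 0)) τ else 0)
            + w d * Real.sqrt θ₁ *
              (if 1 ≤ α d then F (fun i => α i - (if i = d then 1 else 0)) τ else 0)))
        (Set.Icc (0:ℝ) 1) τ)
    (hinit : ∀ α ∈ multiIndices D M, F α 0 = f1 α)
    (f g : (Fin D → ℝ) → ℝ)
    (hf : f = fun ξ => ∑ α ∈ multiIndices D M,
      f1 α * Hb θ₁ α (fun d => (ξ d - u₁ d) / Real.sqrt θ₁))
    (hg : g = fun ξ => ∑ α ∈ multiIndices D M,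
      F α 1 * Hb θ₂ α (fun d => (ξ d - u₂ d) / Real.sqrt θ₂)) :
    ∀ p : MvPolynomial (Fin D) ℝ, p.totalDegree ≤ M →
      ∫ ξ, MvPolynomial.eval ξ p * f ξ = ∫ ξ, MvPolynomial.eval ξ p * g ξ := by
  intro p hdeg
  have h1 : ∫ ξ, MvPolynomial.eval ξ p * f ξ
      = ∑ β ∈ p.support, ∑ α ∈ multiIndices D M, (MvPolynomial.coeff β p * f1 α) *
          ∏ d, Mo (β d) (α d) (u₁ d) (Real.sqrt θ₁) := by
    rw [hf]
    exact integral_poly_sum p hθ₁ u₁ f1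
  have h2 : ∫ ξ, MvPolynomial.eval ξ p * g ξ
      = ∑ β ∈ p.support, ∑ α ∈ multiIndices D M, (MvPolynomial.coeff β p * F α 1) *
          ∏ d, Mo (β d) (α d) (u₂ d) (Real.sqrt θ₂) := by
    rw [hg]
    exact integral_poly_sum p hθ₂ u₂ (fun α => F α 1)
  rw [h1, h2]
  apply Finset.sum_congr rfl
  intro β hβ
  have hβM : (∑ d, β d) ≤ M := by
    have h := MvPolynomial.le_totalDegree hβ
    have he : (β.sum fun _ e => e) = ∑ d, β d := by
      rw [Finsupp.sum]
      apply Finset.sum_subset (Finset.subset_univ _)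
      intro x _ hx
      exact Finsupp.notMem_support_iff.1 hx
    rw [he] at h
    exact le_trans h hdeg
  have hcons := conservation D M hM u₁ u₂ θ₁ θ₂ hθ₁ hθ₂ θh hθh w hw R S hR hS f1 F
    hODE hinit (fun d => β d) hβM
  have l1 : ∀ (c : (Fin D → ℕ) → ℝ) (uu : Fin D → ℝ) (s : ℝ),
      ∑ α ∈ multiIndices D M, (MvPolynomial.coeff β p * c α) * ∏ d, Mo (β d) (α d) (uu d) s
      = MvPolynomial.coeff β p *
          ∑ α ∈ multiIndices D M, c α * ∏ d, Mo (β d) (α d) (uu d) s := by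
    intro c uu s
    rw [Finset.mul_sum]
    exact Finset.sum_congr rfl (fun α _ => by ring)
  rw [l1, l1, hcons]
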